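/- With P_k defined by P_0 = (1/2)∂_x(x(x-1)(x-λ)) and P_{k+1} = ∂_x(P_k)·f + (1/2-k)·P_k·∂_x f where f = x(x-1)(x-λ), one has for all k ≥ 0 the identity P_k(x+1, λ+1) = P_k(-x, -λ) in ℚ[x, λ]. -/
import Mathlib

open MvPolynomial

/-- `f(x) = x(x-1)(x-λ)`, with `X 0 = x` and `X 1 = λ`. -/
noncomputable def legendreF : MvPolynomial (Fin 2) ℚ :=
  X 0 * (X 0 - 1) * (X 0 - X 1)

/-- The basic inflection polynomials `P_k = P_{1,k}`. -/
noncomputable def inflP : ℕ → MvPolynomial (Fin 2) ℚ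
  | 0 => C (1/2 : ℚ) * pderiv 0 legendreF
  | k + 1 =>
      pderiv 0 (inflP k) * legendreF +
        C ((1/2 : ℚ) - (k : ℚ)) * (inflP k * pderiv 0 legendreF)

lemma pd_aux1 : pderiv (0 : Fin 2) ((X 0 : MvPolynomial (Fin 2) ℚ) + 1) = 1 := by
  simp
lemma pd_aux2 : pderiv (0 : Fin 2) ((X 1 : MvPolynomial (Fin 2) ℚ) + 1) = 0 := by
  simp [pderiv_X, Pi.single_apply]
lemma pd_aux3 : pderiv (0 : Fin 2) (-(X 0 : MvPolynomial (Fin 2) ℚ)) = -1 := by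
  simp
lemma pd_aux4 : pderiv (0 : Fin 2) (-(X 1 : MvPolynomial (Fin 2) ℚ)) = 0 := by
  simp [pderiv_X, Pi.single_apply]

lemma hT (i : Fin 2) : pderiv (0 : Fin 2) (![(X 0 : MvPolynomial (Fin 2) ℚ) + 1, X 1 + 1] i)
    = aeval ![(X 0 : MvPolynomial (Fin 2) ℚ) + 1, X 1 + 1] (pderiv 0 (X i : MvPolynomial (Fin 2) ℚ)) := by
  fin_cases i <;> simp [pderiv_X, Pi.single_apply]

lemma hN (i : Fin 2) : pderiv (0 : Fin 2) (![-(X 0 : MvPolynomial (Fin 2) ℚ), -(X 1)] i)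
    = - aeval ![-(X 0 : MvPolynomial (Fin 2) ℚ), -(X 1)] (pderiv 0 (X i : MvPolynomial (Fin 2) ℚ)) := by
  fin_cases i <;> simp [pderiv_X, Pi.single_apply]

lemma pderiv_aeval_T (p : MvPolynomial (Fin 2) ℚ) :
    pderiv 0 (aeval ![(X 0 : MvPolynomial (Fin 2) ℚ) + 1, X 1 + 1] p)
      = aeval ![(X 0 : MvPolynomial (Fin 2) ℚ) + 1, X 1 + 1] (pderiv 0 p) := by
  induction p using MvPolynomial.induction_on with
  | C a => simp
  | add p q hp hq => simp only [map_add, hp, hq]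
  | mul_X p i hp =>
    simp only [map_mul, aeval_X, pderiv_mul, map_add, hp, hT]

lemma pderiv_aeval_N (p : MvPolynomial (Fin 2) ℚ) :
    pderiv 0 (aeval ![-(X 0 : MvPolynomial (Fin 2) ℚ), -(X 1)] p)
      = - aeval ![-(X 0 : MvPolynomial (Fin 2) ℚ), -(X 1)] (pderiv 0 p) := by
  induction p using MvPolynomial.induction_on with
  | C a => simp
  | add p q hp hq => simp only [map_add, hp, hq]; ring
  | mul_X p i hp =>
    simp only [map_mul, aeval_X, pderiv_mul, map_add, hp, hN]
    ring

lemma TF : aeval ![(X 0 : MvPolynomial (Fin 2) ℚ) + 1, X 1 + 1] legendreF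
    = - aeval ![-(X 0 : MvPolynomial (Fin 2) ℚ), -(X 1)] legendreF := by
  simp only [legendreF, map_mul, map_sub, map_one, aeval_X, Fin.isValue,
    Matrix.cons_val_zero, Matrix.cons_val_one, Matrix.head_cons]
  ring

lemma TF' : aeval ![(X 0 : MvPolynomial (Fin 2) ℚ) + 1, X 1 + 1] (pderiv 0 legendreF)
    = aeval ![-(X 0 : MvPolynomial (Fin 2) ℚ), -(X 1)] (pderiv 0 legendreF) := by
  rw [← pderiv_aeval_T, TF, map_neg, pderiv_aeval_N, neg_neg]

/-- The second symmetry: `P_k(x+1, λ+1) = P_k(-x, -λ)`. -/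
theorem inflP_translation_symmetry (k : ℕ) :
    MvPolynomial.aeval ![(X 0 : MvPolynomial (Fin 2) ℚ) + 1, X 1 + 1] (inflP k) =
      MvPolynomial.aeval ![-(X 0 : MvPolynomial (Fin 2) ℚ), -(X 1)] (inflP k) := by
  induction k with
  | zero => simp only [inflP, map_mul, aeval_C, TF']
  | succ k ih =>
    simp only [inflP, map_add, map_mul, aeval_C]
    rw [← pderiv_aeval_T, ih, pderiv_aeval_N, TF, TF']
    ring
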